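/- Let n ≥ 2, 0 < λ ≤ Λ, R > 2, and define ψ_R(x) = 2[((n−1)Λ/λ + 1)x_n − (n−1)(Λ/λ)(1/R)x_n² + (1/R)|x′|²] for x = (x′, x_n) in the half-cube Q_R⁺ = {x : |x′| < R, 0 < x_n < R}. Then for any measurable coefficients a_ij with λI ≤ [a_ij(x)] ≤ ΛI (as symmetric matrices) for all x in Q_R⁺, one has a_ij(x)(ψ_R)_{ij}(x) ≤ 0 for all x ∈ Q_R⁺, i.e. ψ_R is a supersolution of the linear uniformly elliptic operator. -/

import Mathlib

open Finset

/-- Second partial derivative `∂_j ∂_i f` at `x`. -/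
noncomputable def pd2 {m : ℕ} (f : (Fin m → ℝ) → ℝ) (x : Fin m → ℝ) (i j : Fin m) : ℝ :=
  fderiv ℝ (fun y => fderiv ℝ f y (Pi.single i 1)) x (Pi.single j 1)

lemma quad_fderiv {m : ℕ} (c d e : ℝ) (L : Fin m) (s : Finset (Fin m)) (y v : Fin m → ℝ) :
    fderiv ℝ (fun y : Fin m → ℝ => 2 * (c * y L - d * (y L * y L) + e * ∑ k ∈ s, y k * y k)) y v
      = 2 * (c * v L - d * (y L * v L + y L * v L) + e * ∑ k ∈ s, (y k * v k + y k * v k)) := by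
  have h0 : ∀ p : Fin m, HasFDerivAt (fun y : Fin m → ℝ => y p)
      (ContinuousLinearMap.proj p : (Fin m → ℝ) →L[ℝ] ℝ) y := fun p => hasFDerivAt_apply p y
  have h1 := (h0 L).const_mul c
  have h2 := ((h0 L).fun_mul (h0 L)).const_mul d
  have h3 := (HasFDerivAt.fun_sum (fun k (_ : k ∈ s) => (h0 k).fun_mul (h0 k))).const_mul e
  have H := ((h1.fun_sub h2).fun_add h3).const_mul 2
  rw [H.fderiv]
  simp [smul_eq_mul, mul_add, mul_comm]

lemma affine_fderiv {m : ℕ} (A B : ℝ) (C : Fin m → ℝ) (L : Fin m) (s : Finset (Fin m))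
    (y v : Fin m → ℝ) :
    fderiv ℝ (fun y : Fin m → ℝ => A + B * y L + ∑ k ∈ s, C k * y k) y v
      = B * v L + ∑ k ∈ s, C k * v k := by
  have h0 : ∀ p : Fin m, HasFDerivAt (fun y : Fin m → ℝ => y p)
      (ContinuousLinearMap.proj p : (Fin m → ℝ) →L[ℝ] ℝ) y := fun p => hasFDerivAt_apply p y
  have H := (((hasFDerivAt_const A y).fun_add ((h0 L).const_mul B)).fun_add
      (HasFDerivAt.fun_sum (fun k (_ : k ∈ s) => (h0 k).const_mul (C k))))
  rw [H.fderiv]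
  simp [smul_eq_mul]

lemma single_collapse {m : ℕ} (b : Fin m → Fin m → ℝ) (p : Fin m) :
    ∑ i, ∑ j, b i j * (Pi.single p 1 : Fin m → ℝ) i * (Pi.single p 1 : Fin m → ℝ) j = b p p := by
  simp [Pi.single_apply]

lemma single_collapse' {m : ℕ} (b : Fin m → Fin m → ℝ) (p : Fin m) :
    ∑ i, ∑ j, b i j * (Pi.single i 1 : Fin m → ℝ) p * (Pi.single j 1 : Fin m → ℝ) p = b p p := by
  simp [Pi.single_apply]

lemma single_sq {m : ℕ} (p : Fin m) : ∑ i, ((Pi.single p 1 : Fin m → ℝ) i) ^ 2 = 1 := by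
  simp [Pi.single_apply, sq]

set_option maxHeartbeats 1000000 in
/-- The barrier `ψ_R` is a supersolution of any uniformly elliptic operator on the
half-cube `Q_R⁺` (dimension `n+1 ≥ 2`, with `n` tangential directions). -/
theorem stmt0 (n : ℕ) (hn : 1 ≤ n) (lam Lam R : ℝ) (hlam : 0 < lam) (hle : lam ≤ Lam)
    (hR : 2 < R)
    (a : (Fin (n + 1) → ℝ) → Matrix (Fin (n + 1)) (Fin (n + 1)) ℝ)
    (Q : Set (Fin (n + 1) → ℝ))
    (hQ : Q = {x | ∑ i : Fin n, (x i.castSucc) ^ 2 < R ^ 2 ∧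
      0 < x (Fin.last n) ∧ x (Fin.last n) < R})
    (hell : ∀ x ∈ Q, ∀ ξ : Fin (n + 1) → ℝ,
      lam * ∑ i, (ξ i) ^ 2 ≤ ∑ i, ∑ j, a x i j * ξ i * ξ j ∧
      ∑ i, ∑ j, a x i j * ξ i * ξ j ≤ Lam * ∑ i, (ξ i) ^ 2)
    (ψ : (Fin (n + 1) → ℝ) → ℝ)
    (hψ : ψ = fun x => 2 * (((n : ℝ) * (Lam / lam) + 1) * x (Fin.last n)
      - (n : ℝ) * (Lam / lam) * (1 / R) * (x (Fin.last n)) ^ 2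
      + (1 / R) * ∑ i : Fin n, (x i.castSucc) ^ 2)) :
    ∀ x ∈ Q, ∑ i, ∑ j, a x i j * pd2 ψ x i j ≤ 0 := by
  intro x hx
  have hLam : 0 < Lam := lt_of_lt_of_le hlam hle
  have hR0 : (0:ℝ) < R := by linarith
  set L : Fin (n + 1) := Fin.last n with hL
  set c : ℝ := (n : ℝ) * (Lam / lam) + 1 with hc
  set d : ℝ := (n : ℝ) * (Lam / lam) * (1 / R) with hd
  set e : ℝ := 1 / R with he
  set s : Finset (Fin (n + 1)) := Finset.univ.map Fin.castSuccEmb with hs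
  have hmap : ∀ f : Fin (n + 1) → ℝ, ∑ k ∈ s, f k = ∑ k : Fin n, f k.castSucc := by
    intro f; rw [hs, Finset.sum_map]; rfl
  have hψ' : ψ = fun y : Fin (n+1) → ℝ =>
      2 * (c * y L - d * (y L * y L) + e * ∑ k ∈ s, y k * y k) := by
    rw [hψ]; funext y; rw [hmap (fun k => y k * y k)]
    simp only [pow_two]
  -- first derivative
  have hfd1 : ∀ y v : Fin (n+1) → ℝ, fderiv ℝ ψ y v
      = 2 * (c * v L - d * (y L * v L + y L * v L) + e * ∑ k ∈ s, (y k * v k + y k * v k)) := by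
    intro y v; rw [hψ']; exact quad_fderiv c d e L s y v
  -- second derivative
  have hpd : ∀ i j, pd2 ψ x i j
      = -4*d*((Pi.single i 1 : Fin (n+1) → ℝ) L)*((Pi.single j 1 : Fin (n+1) → ℝ) L)
        + 4*e*∑ k : Fin n, ((Pi.single i 1 : Fin (n+1) → ℝ) k.castSucc)
            * ((Pi.single j 1 : Fin (n+1) → ℝ) k.castSucc) := by
    intro i j
    have hfun : (fun y => fderiv ℝ ψ y (Pi.single i 1))
        = fun y : Fin (n+1) → ℝ => (2*(c * (Pi.single i 1 : Fin (n+1) → ℝ) L))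
            + (-(4*d*((Pi.single i 1 : Fin (n+1) → ℝ) L))) * y L
            + ∑ k ∈ s, (4*e*((Pi.single i 1 : Fin (n+1) → ℝ) k)) * y k := by
      funext y
      rw [hfd1 y (Pi.single i 1)]
      have hsum : 2 * (e * ∑ k ∈ s, (y k * (Pi.single i 1 : Fin (n+1) → ℝ) k
            + y k * (Pi.single i 1 : Fin (n+1) → ℝ) k))
          = ∑ k ∈ s, (4*e*((Pi.single i 1 : Fin (n+1) → ℝ) k)) * y k := by
        rw [Finset.mul_sum, Finset.mul_sum]
        exact Finset.sum_congr rfl fun k _ => by ring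
      linear_combination hsum
    rw [pd2, hfun, affine_fderiv]
    rw [hmap (fun k => (4*e*((Pi.single i 1 : Fin (n+1) → ℝ) k))
        * (Pi.single j 1 : Fin (n+1) → ℝ) k)]
    rw [Finset.mul_sum]
    exact congrArg₂ (· + ·) (by ring) (Finset.sum_congr rfl fun k _ => by ring)
  -- quadratic form bounds at basis vectors
  have hALL : lam ≤ a x L L := by
    have h := (hell x hx (Pi.single L 1)).1
    rwa [single_sq, single_collapse (fun i j => a x i j) L, mul_one] at h
  have hdiag : ∀ k : Fin n, a x k.castSucc k.castSucc ≤ Lam := by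
    intro k
    have h := (hell x hx (Pi.single k.castSucc 1)).2
    rwa [single_sq, single_collapse (fun i j => a x i j) k.castSucc, mul_one] at h
  -- total sum
  have t1 : ∑ i, ∑ j, a x i j * (-4*d*((Pi.single i 1 : Fin (n+1) → ℝ) L)
        *((Pi.single j 1 : Fin (n+1) → ℝ) L)) = -4*d * a x L L := by
    rw [← single_collapse' (fun i j => a x i j) L, Finset.mul_sum]
    refine Finset.sum_congr rfl fun i _ => ?_
    rw [Finset.mul_sum]
    exact Finset.sum_congr rfl fun j _ => by ring
  have t2 : ∑ i, ∑ j, a x i j * (4*e*∑ k : Fin n,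
        ((Pi.single i 1 : Fin (n+1) → ℝ) k.castSucc)*((Pi.single j 1 : Fin (n+1) → ℝ) k.castSucc))
      = 4*e*∑ k : Fin n, a x k.castSucc k.castSucc := by
    have key : ∀ k : Fin n, ∑ i : Fin (n+1), ∑ j : Fin (n+1),
        4*e*(a x i j * (Pi.single i 1 : Fin (n+1) → ℝ) k.castSucc
          * (Pi.single j 1 : Fin (n+1) → ℝ) k.castSucc)
        = 4*e* a x k.castSucc k.castSucc := by
      intro k
      rw [← single_collapse' (fun i j => a x i j) k.castSucc, Finset.mul_sum]
      refine Finset.sum_congr rfl fun i _ => ?_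
      rw [Finset.mul_sum]
    calc ∑ i, ∑ j, a x i j * (4*e*∑ k : Fin n,
          ((Pi.single i 1 : Fin (n+1) → ℝ) k.castSucc)*((Pi.single j 1 : Fin (n+1) → ℝ) k.castSucc))
        = ∑ i : Fin (n+1), ∑ j : Fin (n+1), ∑ k : Fin n,
            4*e*(a x i j * (Pi.single i 1 : Fin (n+1) → ℝ) k.castSucc
              * (Pi.single j 1 : Fin (n+1) → ℝ) k.castSucc) := by
          refine Finset.sum_congr rfl fun i _ => Finset.sum_congr rfl fun j _ => ?_
          rw [Finset.mul_sum, Finset.mul_sum]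
          exact Finset.sum_congr rfl fun k _ => by ring
      _ = ∑ i : Fin (n+1), ∑ k : Fin n, ∑ j : Fin (n+1),
            4*e*(a x i j * (Pi.single i 1 : Fin (n+1) → ℝ) k.castSucc
              * (Pi.single j 1 : Fin (n+1) → ℝ) k.castSucc) :=
          Finset.sum_congr rfl fun i _ => Finset.sum_comm
      _ = ∑ k : Fin n, ∑ i : Fin (n+1), ∑ j : Fin (n+1),
            4*e*(a x i j * (Pi.single i 1 : Fin (n+1) → ℝ) k.castSucc
              * (Pi.single j 1 : Fin (n+1) → ℝ) k.castSucc) := Finset.sum_comm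
      _ = ∑ k : Fin n, 4*e*a x k.castSucc k.castSucc :=
          Finset.sum_congr rfl fun k _ => key k
      _ = 4*e*∑ k : Fin n, a x k.castSucc k.castSucc := (Finset.mul_sum _ _ _).symm
  have htotal : ∑ i, ∑ j, a x i j * pd2 ψ x i j
      = -4*d * a x L L + 4*e*∑ k : Fin n, a x k.castSucc k.castSucc := by
    calc ∑ i, ∑ j, a x i j * pd2 ψ x i j
        = ∑ i, ∑ j, (a x i j * (-4*d*((Pi.single i 1 : Fin (n+1) → ℝ) L)
              *((Pi.single j 1 : Fin (n+1) → ℝ) L))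
            + a x i j * (4*e*∑ k : Fin n, ((Pi.single i 1 : Fin (n+1) → ℝ) k.castSucc)
              *((Pi.single j 1 : Fin (n+1) → ℝ) k.castSucc))) := by
          refine Finset.sum_congr rfl fun i _ => Finset.sum_congr rfl fun j _ => ?_
          rw [hpd i j]; ring
      _ = -4*d * a x L L + 4*e*∑ k : Fin n, a x k.castSucc k.castSucc := by
          simp only [Finset.sum_add_distrib]; rw [t1, t2]
  rw [htotal]
  have he0 : 0 ≤ e := by rw [he]; positivity
  have hd0 : 0 ≤ d := by
    rw [hd]
    have : (0:ℝ) ≤ Lam / lam := div_nonneg hLam.le hlam.le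
    have : (0:ℝ) ≤ 1 / R := by positivity
    positivity
  have h1 : -4*d * a x L L ≤ -4*d * lam :=
    mul_le_mul_of_nonpos_left hALL (by linarith)
  have h2 : 4*e*∑ k : Fin n, a x k.castSucc k.castSucc ≤ 4*e*((n:ℝ)*Lam) := by
    have hsl : ∑ k : Fin n, a x k.castSucc k.castSucc ≤ (n:ℝ)*Lam := by
      calc ∑ k : Fin n, a x k.castSucc k.castSucc ≤ ∑ _k : Fin n, Lam :=
            Finset.sum_le_sum fun k _ => hdiag k
        _ = (n:ℝ)*Lam := by simp [mul_comm]
    nlinarith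
  have hzero : -4*d * lam + 4*e*((n:ℝ)*Lam) = 0 := by
    rw [hd, he]; field_simp; ring
  linarith
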